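/- The function G : {0,1}^ℕ_c → O(𝔹) mapping 0^ω to 𝔹 and every other computable binary sequence to 𝔹 \ {T} is K-computable, where T(n) is the halting time of φ_n(n) (0 if divergent). -/

import Mathlib

open Classical

/-- The standard enumeration of partial computable functions. -/
noncomputable def phi (e : ℕ) : ℕ →. ℕ := (Denumerable.ofNat Nat.Partrec.Code e).eval

/-- The halting-time function: `T n` is the halting time of `φ_n(n)` (measured by `evaln`),
and `0` if `φ_n(n)` diverges. -/
noncomputable def T : ℕ → ℕ := fun n =>
  if h : ∃ s, (Nat.Partrec.Code.evaln s (Denumerable.ofNat Nat.Partrec.Code n) n).isSome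
  then Nat.find h else 0

/-- The cylinder of elements of Baire space extending the finite sequence `u`. -/
def cylN (u : List ℕ) : Set (ℕ → ℕ) := {f | ∀ i : Fin u.length, f i.1 = u.get i}

/-- The finite prefix of length `m` of the oracle `f`. -/
def pref (f : ℕ → ℕ) (m : ℕ) : List ℕ := (List.range m).map f

/-- The finite prefix of length `m` of a boolean oracle. -/
def prefB (f : ℕ → Bool) (m : ℕ) : List Bool := (List.range m).map f

/-- `g` is a name of the open set `U ⊆ 𝔹` in the admissible representation of `O(𝔹)`:
`g` enumerates basic cylinders (`0` is padding, `encode u + 1` codes the cylinder `[u]`)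
exhausting `U`. -/
def OBName (g : ℕ → ℕ) (U : Set (ℕ → ℕ)) : Prop :=
  U = {f | ∃ (n : ℕ) (u : List ℕ), g n = Encodable.encode u + 1 ∧ f ∈ cylN u}

/-- `e` is a program (Markov-name) for the binary sequence `x`. -/
def computesSeq (e : ℕ) (x : ℕ → Bool) : Prop :=
  ∀ n, phi e n = Part.some (cond (x n) 1 0)

/-- Kolmogorov complexity of a computable binary sequence. -/
noncomputable def Kseq (x : ℕ → Bool) : ℕ := sInf (Nat.size '' {e | computesSeq e x})

/-! ### Auxiliary development -/

open Nat.Partrec (Code)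
open Nat.Partrec.Code

/-- The partial function our master code computes. -/
def Fc : ℕ →. ℕ := fun p =>
  Nat.rfind fun n => ((Denumerable.ofNat Code p.unpair.1).eval n).map fun v => decide (v = 1)

theorem Fc_partrec : Nat.Partrec Fc := by
  have hc : Computable fun p : ℕ × ℕ => Denumerable.ofNat Code p.1.unpair.1 :=
    (Computable.ofNat _).comp ((Primrec.fst.comp Primrec.unpair).to_comp.comp Computable.fst)
  have h1 : Partrec fun p : ℕ × ℕ => (Denumerable.ofNat Code p.1.unpair.1).eval p.2 :=
    eval_part.comp hc Computable.snd
  have h2 : Partrec₂ fun (a n : ℕ) =>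
      ((Denumerable.ofNat Code a.unpair.1).eval n).map fun v => decide (v = 1) :=
    (h1.map (((Primrec.eq.comp Primrec.snd (Primrec.const 1))).decide.to_comp.to₂)).to₂
  exact Partrec.nat_iff.1 (Partrec.rfind h2)

noncomputable def c0 : Code := (exists_code.1 Fc_partrec).choose

theorem c0_eval : c0.eval = Fc := (exists_code.1 Fc_partrec).choose_spec

/-- The first-1 search value of program `e`. -/
noncomputable def R (e : ℕ) : Part ℕ :=
  Nat.rfind fun n => (phi e n).map fun v => decide (v = 1)

noncomputable def pe (e : ℕ) : Code := c0.curry e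

noncomputable def je (e : ℕ) : ℕ := Encodable.encode (pe e)

theorem pe_eval (e z : ℕ) : (pe e).eval z = R e := by
  show (c0.curry e).eval z = R e
  rw [eval_curry, c0_eval]
  simp [Fc, R, phi]

theorem phi_je (e z : ℕ) : phi (je e) z = R e := by
  show (Denumerable.ofNat Code (Encodable.encode (pe e))).eval z = R e
  rw [Denumerable.ofNat_encode, pe_eval]

/-! ### `T` facts -/

theorem isSome_mono {s s' : ℕ} {c : Code} {n : ℕ} (h : s ≤ s')
    (h1 : (evaln s c n).isSome) : (evaln s' c n).isSome := by
  obtain ⟨a, ha⟩ := Option.isSome_iff_exists.1 h1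
  exact Option.isSome_iff_exists.2 ⟨a, evaln_mono h ha⟩

theorem T_dom_iff (n : ℕ) :
    (∃ s, (evaln s (Denumerable.ofNat Code n) n).isSome) ↔ (phi n n).Dom := by
  rw [Part.dom_iff_mem]
  constructor
  · rintro ⟨s, hs⟩
    obtain ⟨a, ha⟩ := Option.isSome_iff_exists.1 hs
    exact ⟨a, evaln_sound ha⟩
  · rintro ⟨a, ha⟩
    obtain ⟨s, hs⟩ := evaln_complete.1 ha
    exact ⟨s, Option.isSome_iff_exists.2 ⟨a, hs⟩⟩

theorem T_ne_zero_iff (n : ℕ) : T n ≠ 0 ↔ (phi n n).Dom := by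
  constructor
  · intro h
    by_contra hd
    have : ¬ ∃ s, (evaln s (Denumerable.ofNat Code n) n).isSome := fun hh => hd ((T_dom_iff n).1 hh)
    simp [T, this] at h
  · intro hd
    have h : ∃ s, (evaln s (Denumerable.ofNat Code n) n).isSome := (T_dom_iff n).2 hd
    have h0 : ¬ (evaln 0 (Denumerable.ofNat Code n) n).isSome := by simp [evaln]
    simp only [T, dif_pos h]
    intro hfind
    exact h0 (hfind ▸ Nat.find_spec h)

theorem T_spec_pos (n : ℕ) (h : T n ≠ 0) :
    (evaln (T n) (Denumerable.ofNat Code n) n).isSome ∧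
      ¬ (evaln (T n - 1) (Denumerable.ofNat Code n) n).isSome := by
  have hd : ∃ s, (evaln s (Denumerable.ofNat Code n) n).isSome :=
    (T_dom_iff n).2 ((T_ne_zero_iff n).1 h)
  have hT : T n = Nat.find hd := by simp [T, dif_pos hd]
  refine ⟨hT ▸ Nat.find_spec hd, ?_⟩
  rw [hT]
  exact Nat.find_min hd (by omega)

theorem T_eq_of (n t : ℕ)
    (h1 : (evaln t (Denumerable.ofNat Code n) n).isSome)
    (h2 : ¬ (evaln (t - 1) (Denumerable.ofNat Code n) n).isSome) : T n = t := by
  have hd : ∃ s, (evaln s (Denumerable.ofNat Code n) n).isSome := ⟨t, h1⟩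
  have hT : T n = Nat.find hd := by simp [T, dif_pos hd]
  rw [hT]
  have hle : Nat.find hd ≤ t := Nat.find_min' hd h1
  have hgt : t - 1 < Nat.find hd := by
    by_contra hh
    exact h2 (isSome_mono (by omega) (Nat.find_spec hd))
  omega

/-! ### The algorithm -/

def pw (k : ℕ) : ℕ := (fun n => 2*n)^[k] 1

theorem pw_eq (k : ℕ) : pw k = 2^k := by
  induction k with
  | zero => rfl
  | succ n ih => simp [pw, Function.iterate_succ_apply'] at *; omega

theorem primrec_pw : Primrec pw :=
  Primrec.nat_iterate Primrec.id (Primrec.const 1)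
    ((Primrec.nat_mul.comp (Primrec.const 2) Primrec.snd).to₂)

noncomputable def badAt (s : ℕ) (u : List ℕ) (i : ℕ) : Bool :=
  if u.getD i 0 = 0 then (evaln s (Denumerable.ofNat Code i) i).isSome
  else !((evaln (u.getD i 0) (Denumerable.ofNat Code i) i).isSome
        && !(evaln (u.getD i 0 - 1) (Denumerable.ofNat Code i) i).isSome)

noncomputable def wit (s : ℕ) (u : List ℕ) : Bool := (List.range u.length).any (badAt s u)

noncomputable def okC (s k : ℕ) (u : List ℕ) : Bool :=
  (List.range (pw k)).all fun e =>
    decide (je e < u.length) && (decide (u.getD (je e) 0 = 0) || (evaln s (pe e) 0).isSome)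

noncomputable def Bnd (s k : ℕ) (u : List ℕ) : ℕ :=
  ((List.range (pw k)).map fun e =>
    if u.getD (je e) 0 = 0 then 0 else (evaln s (pe e) 0).getD 0).foldr max 0

noncomputable def acc (k : ℕ) (l : List Bool) (s : ℕ) (u : List ℕ) : Bool :=
  okC s k u && ((List.range (min s l.length)).all fun i => l.getD i true == false)
    && decide (Bnd s k u < min s l.length)

noncomputable def emit (k : ℕ) (l : List Bool) (s : ℕ) : List ℕ :=
  0 :: ((List.range s).filterMap fun c =>
    bif wit s (Denumerable.ofNat (List ℕ) c) || acc k l s (Denumerable.ofNat (List ℕ) c)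
    then some (c+1) else none)

noncomputable def Mfun (k : ℕ) (l : List Bool) : List ℕ :=
  (List.range (l.length + 1)).flatMap fun s => emit k l s

/-! ### Primitive recursiveness -/

theorem primrec_list_all {α β} [Primcodable α] [Primcodable β] {f : α → List β} {p : α → β → Bool}
    (hf : Primrec f) (hp : Primrec₂ p) : Primrec fun a => (f a).all (p a) := by
  have h : Primrec fun a => (f a).foldr (fun b s => p a b && s) true :=
    Primrec.list_foldr hf (Primrec.const true)
      ((Primrec.and.comp (hp.comp Primrec.fst (Primrec.fst.comp Primrec.snd))
        (Primrec.snd.comp Primrec.snd)).to₂)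
  refine h.of_eq fun a => ?_
  induction f a with
  | nil => rfl
  | cons b l ih => simp [List.all_cons, ih]

theorem primrec_list_any {α β} [Primcodable α] [Primcodable β] {f : α → List β} {p : α → β → Bool}
    (hf : Primrec f) (hp : Primrec₂ p) : Primrec fun a => (f a).any (p a) := by
  have h : Primrec fun a => (f a).foldr (fun b s => p a b || s) false :=
    Primrec.list_foldr hf (Primrec.const false)
      ((Primrec.or.comp (hp.comp Primrec.fst (Primrec.fst.comp Primrec.snd))
        (Primrec.snd.comp Primrec.snd)).to₂)
  refine h.of_eq fun a => ?_
  induction f a with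
  | nil => rfl
  | cons b l ih => simp [List.any_cons, ih]

theorem primrec_evaln_diag : Primrec₂ fun (s i : ℕ) => (evaln s (Denumerable.ofNat Code i) i).isSome :=
  Primrec.option_isSome.comp <| primrec_evaln.comp <|
    Primrec.pair (Primrec.pair Primrec.fst ((Primrec.ofNat Code).comp Primrec.snd)) Primrec.snd

theorem primrec_pe : Primrec pe := primrec₂_curry.comp (Primrec.const c0) Primrec.id

theorem primrec_je : Primrec je := Primrec.encode.comp primrec_pe

theorem primrec_badAt : Primrec fun x : (ℕ × List ℕ) × ℕ => badAt x.1.1 x.1.2 x.2 := by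
  have ht : Primrec fun x : (ℕ × List ℕ) × ℕ => (x.1.2).getD x.2 0 :=
    (Primrec.list_getD 0).comp (Primrec.snd.comp Primrec.fst) Primrec.snd
  have hdiag : Primrec fun x : (ℕ × List ℕ) × ℕ => (evaln x.1.1 (Denumerable.ofNat Code x.2) x.2).isSome :=
    primrec_evaln_diag.comp (Primrec.fst.comp Primrec.fst) Primrec.snd
  have h1 : Primrec fun x : (ℕ × List ℕ) × ℕ => (evaln ((x.1.2).getD x.2 0) (Denumerable.ofNat Code x.2) x.2).isSome :=
    primrec_evaln_diag.comp ht Primrec.snd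
  have h2 : Primrec fun x : (ℕ × List ℕ) × ℕ => (evaln ((x.1.2).getD x.2 0 - 1) (Denumerable.ofNat Code x.2) x.2).isSome :=
    primrec_evaln_diag.comp (Primrec.nat_sub.comp ht (Primrec.const 1)) Primrec.snd
  exact Primrec.ite (Primrec.eq.comp ht (Primrec.const 0)) hdiag
    (Primrec.not.comp (Primrec.and.comp h1 (Primrec.not.comp h2)))

theorem primrec_wit : Primrec₂ wit := by
  have : Primrec fun x : ℕ × List ℕ => (List.range x.2.length).any (badAt x.1 x.2) :=
    primrec_list_any (Primrec.list_range.comp (Primrec.list_length.comp Primrec.snd))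
      primrec_badAt.to₂
  exact this.to₂

theorem primrec_okC : Primrec fun x : (ℕ × ℕ) × List ℕ => okC x.1.1 x.1.2 x.2 := by
  have hr : Primrec fun x : (ℕ × ℕ) × List ℕ => List.range (pw x.1.2) :=
    Primrec.list_range.comp (primrec_pw.comp (Primrec.snd.comp Primrec.fst))
  refine primrec_list_all hr ?_
  have hje : Primrec fun y : ((ℕ × ℕ) × List ℕ) × ℕ => je y.2 := primrec_je.comp Primrec.snd
  have hu : Primrec fun y : ((ℕ × ℕ) × List ℕ) × ℕ => y.1.2 := Primrec.snd.comp Primrec.fst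
  have hgd : Primrec fun y : ((ℕ × ℕ) × List ℕ) × ℕ => (y.1.2).getD (je y.2) 0 :=
    (Primrec.list_getD 0).comp hu hje
  have hs : Primrec fun y : ((ℕ × ℕ) × List ℕ) × ℕ => y.1.1.1 :=
    Primrec.fst.comp (Primrec.fst.comp Primrec.fst)
  have hev : Primrec fun y : ((ℕ × ℕ) × List ℕ) × ℕ => (evaln y.1.1.1 (pe y.2) 0).isSome :=
    Primrec.option_isSome.comp <| primrec_evaln.comp <|
      Primrec.pair (Primrec.pair hs (primrec_pe.comp Primrec.snd)) (Primrec.const 0)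
  exact (Primrec.and.comp
    (Primrec.nat_lt.comp hje (Primrec.list_length.comp hu)).decide
    (Primrec.or.comp (Primrec.eq.comp hgd (Primrec.const 0)).decide hev)).to₂

theorem primrec_Bnd : Primrec fun x : (ℕ × ℕ) × List ℕ => Bnd x.1.1 x.1.2 x.2 := by
  have hr : Primrec fun x : (ℕ × ℕ) × List ℕ => List.range (pw x.1.2) :=
    Primrec.list_range.comp (primrec_pw.comp (Primrec.snd.comp Primrec.fst))
  have hje : Primrec fun y : ((ℕ × ℕ) × List ℕ) × ℕ => je y.2 := primrec_je.comp Primrec.snd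
  have hu : Primrec fun y : ((ℕ × ℕ) × List ℕ) × ℕ => y.1.2 := Primrec.snd.comp Primrec.fst
  have hgd : Primrec fun y : ((ℕ × ℕ) × List ℕ) × ℕ => (y.1.2).getD (je y.2) 0 :=
    (Primrec.list_getD 0).comp hu hje
  have hs : Primrec fun y : ((ℕ × ℕ) × List ℕ) × ℕ => y.1.1.1 :=
    Primrec.fst.comp (Primrec.fst.comp Primrec.fst)
  have hev : Primrec fun y : ((ℕ × ℕ) × List ℕ) × ℕ => (evaln y.1.1.1 (pe y.2) 0).getD 0 :=
    (Primrec.option_getD.comp (primrec_evaln.comp <|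
      Primrec.pair (Primrec.pair hs (primrec_pe.comp Primrec.snd)) (Primrec.const 0))
      (Primrec.const 0))
  have hmap : Primrec fun x : (ℕ × ℕ) × List ℕ => (List.range (pw x.1.2)).map fun e =>
      if x.2.getD (je e) 0 = 0 then 0 else (evaln x.1.1 (pe e) 0).getD 0 :=
    Primrec.list_map hr (Primrec.ite (Primrec.eq.comp hgd (Primrec.const 0)) (Primrec.const 0) hev).to₂
  exact Primrec.list_foldr hmap (Primrec.const 0)
    (Primrec.nat_max.comp (Primrec.fst.comp Primrec.snd) (Primrec.snd.comp Primrec.snd)).to₂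

theorem primrec_acc : Primrec fun x : ((ℕ × List Bool) × ℕ) × List ℕ => acc x.1.1.1 x.1.1.2 x.1.2 x.2 := by
  have hs : Primrec fun x : ((ℕ × List Bool) × ℕ) × List ℕ => x.1.2 := Primrec.snd.comp Primrec.fst
  have hk : Primrec fun x : ((ℕ × List Bool) × ℕ) × List ℕ => x.1.1.1 :=
    Primrec.fst.comp (Primrec.fst.comp Primrec.fst)
  have hl : Primrec fun x : ((ℕ × List Bool) × ℕ) × List ℕ => x.1.1.2 :=
    Primrec.snd.comp (Primrec.fst.comp Primrec.fst)
  have hu : Primrec fun x : ((ℕ × List Bool) × ℕ) × List ℕ => x.2 := Primrec.snd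
  have hokC : Primrec fun x : ((ℕ × List Bool) × ℕ) × List ℕ => okC x.1.2 x.1.1.1 x.2 :=
    primrec_okC.comp (Primrec.pair (Primrec.pair hs hk) hu)
  have hBnd : Primrec fun x : ((ℕ × List Bool) × ℕ) × List ℕ => Bnd x.1.2 x.1.1.1 x.2 :=
    primrec_Bnd.comp (Primrec.pair (Primrec.pair hs hk) hu)
  have hmin : Primrec fun x : ((ℕ × List Bool) × ℕ) × List ℕ => min x.1.2 x.1.1.2.length :=
    Primrec.nat_min.comp hs (Primrec.list_length.comp hl)
  have hall : Primrec fun x : ((ℕ × List Bool) × ℕ) × List ℕ =>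
      (List.range (min x.1.2 x.1.1.2.length)).all fun i => x.1.1.2.getD i true == false := by
    refine primrec_list_all (Primrec.list_range.comp hmin) ?_
    have : Primrec fun y : (((ℕ × List Bool) × ℕ) × List ℕ) × ℕ => y.1.1.1.2.getD y.2 true :=
      (Primrec.list_getD true).comp (hl.comp Primrec.fst) Primrec.snd
    exact (Primrec.beq.comp this (Primrec.const false)).to₂
  exact Primrec.and.comp (Primrec.and.comp hokC hall) (Primrec.nat_lt.comp hBnd hmin).decide

theorem primrec_emit : Primrec fun x : (ℕ × List Bool) × ℕ => emit x.1.1 x.1.2 x.2 := by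
  have hr : Primrec fun x : (ℕ × List Bool) × ℕ => List.range x.2 :=
    Primrec.list_range.comp Primrec.snd
  have hcond : Primrec fun y : ((ℕ × List Bool) × ℕ) × ℕ =>
      (wit y.1.2 (Denumerable.ofNat (List ℕ) y.2) || acc y.1.1.1 y.1.1.2 y.1.2 (Denumerable.ofNat (List ℕ) y.2)) := by
    have hofn : Primrec fun y : ((ℕ × List Bool) × ℕ) × ℕ => Denumerable.ofNat (List ℕ) y.2 :=
      (Primrec.ofNat _).comp Primrec.snd
    have hwit : Primrec fun y : ((ℕ × List Bool) × ℕ) × ℕ => wit y.1.2 (Denumerable.ofNat (List ℕ) y.2) :=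
      primrec_wit.comp (Primrec.snd.comp Primrec.fst) hofn
    have hacc : Primrec fun y : ((ℕ × List Bool) × ℕ) × ℕ =>
        acc y.1.1.1 y.1.1.2 y.1.2 (Denumerable.ofNat (List ℕ) y.2) :=
      primrec_acc.comp (Primrec.pair Primrec.fst hofn)
    exact Primrec.or.comp hwit hacc
  have hfm : Primrec fun x : (ℕ × List Bool) × ℕ => (List.range x.2).filterMap fun c =>
      bif wit x.2 (Denumerable.ofNat (List ℕ) c) || acc x.1.1 x.1.2 x.2 (Denumerable.ofNat (List ℕ) c)
      then some (c+1) else none := by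
    refine Primrec.listFilterMap hr ?_
    exact (Primrec.cond hcond (Primrec.option_some.comp (Primrec.succ.comp Primrec.snd))
      (Primrec.const (none : Option ℕ))).to₂
  exact Primrec.list_cons.comp (Primrec.const 0) hfm

theorem primrec_Mfun : Primrec₂ Mfun := by
  have : Primrec fun x : ℕ × List Bool => (List.range (x.2.length + 1)).flatMap fun s => emit x.1 x.2 s :=
    Primrec.list_flatMap
      (Primrec.list_range.comp (Primrec.succ.comp (Primrec.list_length.comp Primrec.snd)))
      primrec_emit.to₂
  exact this.to₂

theorem computable_Mfun : Computable₂ Mfun := primrec_Mfun.to_comp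

/-! ### List helpers -/

theorem list_all_congr {α} {l : List α} {f g : α → Bool} (h : ∀ a ∈ l, f a = g a) :
    l.all f = l.all g := by
  induction l with
  | nil => rfl
  | cons b l ih =>
    simp only [List.all_cons]
    rw [h b List.mem_cons_self, ih (fun a ha => h a (List.mem_cons_of_mem b ha))]

theorem list_flatMap_congr {α β} {l : List α} {f g : α → List β} (h : ∀ a ∈ l, f a = g a) :
    l.flatMap f = l.flatMap g := by
  induction l with
  | nil => rfl
  | cons b l ih =>
    simp only [List.flatMap_cons]
    rw [h b List.mem_cons_self, ih (fun a ha => h a (List.mem_cons_of_mem b ha))]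

theorem list_filterMap_congr {α β} {l : List α} {f g : α → Option β} (h : ∀ a ∈ l, f a = g a) :
    l.filterMap f = l.filterMap g := by
  induction l with
  | nil => rfl
  | cons b l ih =>
    simp only [List.filterMap_cons]
    rw [h b List.mem_cons_self, ih (fun a ha => h a (List.mem_cons_of_mem b ha))]

theorem bor_iff {a b : Bool} : (a || b) = true ↔ a = true ∨ b = true := by
  cases a <;> cases b <;> simp

theorem le_foldr_max {a : ℕ} {l : List ℕ} (h : a ∈ l) : a ≤ l.foldr max 0 := by
  induction l with
  | nil => cases h
  | cons b l ih =>
    rcases List.mem_cons.1 h with rfl | h'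
    · exact le_max_left _ _
    · exact le_trans (ih h') (le_max_right _ _)

theorem isPrefix_getD {l₁ l₂ : List ℕ} (h : l₁ <+: l₂) {i : ℕ} (hi : i < l₁.length) :
    l₂.getD i 0 = l₁.getD i 0 := by
  obtain ⟨t, rfl⟩ := h
  exact List.getD_append _ _ _ _ hi

theorem pref_length (f : ℕ → ℕ) (m : ℕ) : (pref f m).length = m := by simp [pref]

theorem pref_getElem (f : ℕ → ℕ) {i m : ℕ} (h : i < m) (h' : i < (pref f m).length) :
    (pref f m)[i] = f i := by
  simp [pref]

theorem pref_getD (f : ℕ → ℕ) {i m : ℕ} (h : i < m) (d : ℕ) : (pref f m).getD i d = f i := by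
  rw [List.getD_eq_getElem _ _ (by rw [pref_length]; omega)]
  simp [pref]

theorem prefB_length (x : ℕ → Bool) (m : ℕ) : (prefB x m).length = m := by simp [prefB]

theorem prefB_getD (x : ℕ → Bool) {i m : ℕ} (h : i < m) (d : Bool) : (prefB x m).getD i d = x i := by
  rw [List.getD_eq_getElem _ _ (by rw [prefB_length]; omega)]
  simp [prefB]

theorem prefB_isPrefix (x : ℕ → Bool) {m m' : ℕ} (h : m ≤ m') : prefB x m <+: prefB x m' := by
  obtain ⟨d, rfl⟩ : ∃ d, m' = m + d := ⟨m' - m, by omega⟩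
  refine ⟨(List.range d).map fun j => x (m + j), ?_⟩
  rw [prefB, prefB, List.range_add, List.map_append, List.map_map]
  rfl

theorem cylN_getD {f : ℕ → ℕ} {u : List ℕ} (hf : f ∈ cylN u) {i : ℕ} (h : i < u.length) :
    u.getD i 0 = f i := by
  have := hf ⟨i, h⟩
  rw [List.getD_eq_getElem _ _ h]
  rw [this, List.get_eq_getElem]

theorem mem_cylN_pref (f : ℕ → ℕ) (m : ℕ) : f ∈ cylN (pref f m) := by
  intro i
  rw [List.get_eq_getElem]
  have hi : (i : ℕ) < m := lt_of_lt_of_eq i.2 (pref_length f m)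
  rw [pref_getElem f hi]

/-! ### Soundness and completeness of `wit` -/

theorem wit_sound {s : ℕ} {u : List ℕ} (h : wit s u = true) : T ∉ cylN u := by
  intro hT
  obtain ⟨i, hi, hbad⟩ := List.any_eq_true.1 h
  rw [List.mem_range] at hi
  have hu : u.getD i 0 = T i := cylN_getD hT hi
  unfold badAt at hbad
  by_cases h0 : u.getD i 0 = 0
  · rw [if_pos h0] at hbad
    have hTi : T i ≠ 0 := (T_ne_zero_iff i).2 ((T_dom_iff i).1 ⟨s, hbad⟩)
    rw [hu] at h0
    exact hTi h0
  · rw [if_neg h0] at hbad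
    have hTi : T i ≠ 0 := fun hz => h0 (by rw [hu, hz])
    obtain ⟨hA, hB⟩ := T_spec_pos i hTi
    rw [hu] at hbad
    rw [hA, Bool.eq_false_iff.2 hB] at hbad
    simp at hbad


theorem wit_complete {u : List ℕ} (h : T ∉ cylN u) : ∃ s, wit s u = true := by
  have : ¬ ∀ i : Fin u.length, T i.1 = u.get i := h
  push_neg at this
  obtain ⟨i, hi⟩ := this
  have hilt : (i : ℕ) < u.length := i.2
  have hu : u.getD i 0 = u.get i := by
    rw [List.getD_eq_getElem _ _ hilt, List.get_eq_getElem]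
  by_cases h0 : u.getD i 0 = 0
  · -- then T i ≠ 0, so φ_i(i) halts; find witnessing stage
    have hTi : T i ≠ 0 := by
      intro hz
      exact hi (by rw [hz, ← hu, h0])
    obtain ⟨hA, _⟩ := T_spec_pos i hTi
    refine ⟨T (i : ℕ), List.any_eq_true.2 ⟨i, List.mem_range.2 hilt, ?_⟩⟩
    unfold badAt
    rw [if_pos h0]
    exact hA
  · refine ⟨0, List.any_eq_true.2 ⟨i, List.mem_range.2 hilt, ?_⟩⟩
    unfold badAt
    rw [if_neg h0]
    cases hA : (evaln (u.getD (i : ℕ) 0) (Denumerable.ofNat Code (i : ℕ)) (i : ℕ)).isSome with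
    | false => simp [hA]
    | true =>
      cases hB : (evaln (u.getD (i : ℕ) 0 - 1) (Denumerable.ofNat Code (i : ℕ)) (i : ℕ)).isSome with
      | true => simp [hA, hB]
      | false =>
        exfalso
        have hTeq : T (i : ℕ) = u.getD (i : ℕ) 0 :=
          T_eq_of (i : ℕ) _ (by rw [hA]) (by rw [hB]; exact Bool.false_ne_true)
        exact hi (by rw [← hu, ← hTeq])

theorem wit_mono {s s' : ℕ} {u : List ℕ} (hss : s ≤ s') (h : wit s u = true) : wit s' u = true := by
  obtain ⟨i, hi, hbad⟩ := List.any_eq_true.1 h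
  refine List.any_eq_true.2 ⟨i, hi, ?_⟩
  unfold badAt at hbad ⊢
  by_cases h0 : u.getD i 0 = 0
  · rw [if_pos h0] at hbad ⊢
    exact isSome_mono hss hbad
  · rwa [if_neg h0] at hbad ⊢

/-! ### `R` facts -/

theorem R_eq {e : ℕ} {x : ℕ → Bool} (hc : computesSeq e x) (hx : ∃ n, x n = true) :
    R e = Part.some (Nat.find hx) := by
  have hp : ∀ n, ((phi e n).map fun v => decide (v = 1)) = Part.some (x n) := by
    intro n
    rw [hc n]
    cases hxn : x n <;> simp
  apply Part.eq_some_iff.2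
  apply Nat.mem_rfind.2
  constructor
  · rw [hp]
    exact Part.mem_some_iff.2 (Nat.find_spec hx).symm
  · intro m hm
    rw [hp]
    have hxm : x m = false := by
      have hmin := Nat.find_min hx hm
      cases hxn : x m
      · rfl
      · exact absurd hxn hmin
    exact Part.mem_some_iff.2 hxm.symm

/-! ### `acc` soundness and completeness -/

theorem exists_uniform {n : ℕ} {P : ℕ → ℕ → Prop}
    (mono : ∀ e s s', s ≤ s' → P e s → P e s') (h : ∀ e < n, ∃ s, P e s) :
    ∃ s, ∀ e < n, P e s := by
  induction n with
  | zero => exact ⟨0, fun e he => absurd he (Nat.not_lt_zero e)⟩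
  | succ n ih =>
    obtain ⟨s1, hs1⟩ := ih (fun e he => h e (he.trans (Nat.lt_succ_self n)))
    obtain ⟨s2, hs2⟩ := h n (Nat.lt_succ_self n)
    refine ⟨max s1 s2, fun e he => ?_⟩
    rcases Nat.lt_succ_iff_lt_or_eq.1 he with h' | rfl
    · exact mono _ _ _ (le_max_left _ _) (hs1 e h')
    · exact mono _ _ _ (le_max_right _ _) hs2

theorem acc_sound {x : ℕ → Bool} {k e s m : ℕ} {u : List ℕ}
    (he : e < pw k) (hc : computesSeq e x) (hx : ∃ n, x n = true)
    (hsm : s ≤ m) (hacc : acc k (prefB x m) s u = true) : T ∉ cylN u := by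
  intro hT
  unfold acc at hacc
  rw [Bool.and_eq_true, Bool.and_eq_true] at hacc
  obtain ⟨⟨hok, hall⟩, hlt⟩ := hacc
  set n0 := Nat.find hx with hn0
  have hminv : min s (prefB x m).length = s := by rw [prefB_length]; omega
  have hm := List.all_eq_true.1 hok e (List.mem_range.2 he)
  rw [Bool.and_eq_true] at hm
  obtain ⟨hlen', hor⟩ := hm
  have hlen : je e < u.length := of_decide_eq_true hlen'
  have hReq : R e = Part.some n0 := R_eq hc hx
  have hdom : (phi (je e) (je e)).Dom := by rw [phi_je, hReq]; trivial
  have hTj : T (je e) ≠ 0 := (T_ne_zero_iff _).2 hdom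
  have hu : u.getD (je e) 0 = T (je e) := cylN_getD hT hlen
  have hne : ¬ (u.getD (je e) 0 = 0) := by rw [hu]; exact hTj
  have hsome : (evaln s (pe e) 0).isSome = true := by
    rcases bor_iff.1 hor with h' | h'
    · exact absurd (of_decide_eq_true h') hne
    · exact h'
  obtain ⟨a, ha⟩ := Option.isSome_iff_exists.1 hsome
  have hmemev : a ∈ (pe e).eval 0 := evaln_sound (Option.mem_def.2 ha)
  rw [pe_eval, hReq] at hmemev
  have haeq : a = n0 := Part.mem_some_iff.1 hmemev
  have hgetD : (evaln s (pe e) 0).getD 0 = n0 := by rw [ha, haeq]; rfl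
  have hmem : n0 ∈ (List.range (pw k)).map
      (fun e' => if u.getD (je e') 0 = 0 then 0 else (evaln s (pe e') 0).getD 0) := by
    refine List.mem_map.2 ⟨e, List.mem_range.2 he, ?_⟩
    rw [if_neg hne, hgetD]
  have hBnd : n0 ≤ Bnd s k u := le_foldr_max hmem
  rw [hminv] at hlt hall
  have hlt' : Bnd s k u < s := of_decide_eq_true hlt
  have hn0s : n0 < s := lt_of_le_of_lt hBnd hlt'
  have hfa := List.all_eq_true.1 hall n0 (List.mem_range.2 hn0s)
  rw [prefB_getD x (lt_of_lt_of_le hn0s hsm)] at hfa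
  rw [Nat.find_spec hx] at hfa
  exact absurd hfa (by decide)

theorem acc_complete (k : ℕ) :
    ∃ (u : List ℕ) (s : ℕ), T ∈ cylN u ∧ Encodable.encode u < s ∧
      acc k (prefB (fun _ => false) s) s u = true := by
  classical
  set J := ((List.range (pw k)).map je).foldr max 0 with hJ
  set u := pref T (J + 1) with huu
  have hulen : u.length = J + 1 := pref_length _ _
  have hje_lt : ∀ e, e < pw k → je e < u.length := by
    intro e he
    rw [hulen]
    have : je e ≤ J := le_foldr_max (List.mem_map.2 ⟨e, List.mem_range.2 he, rfl⟩)
    omega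
  have hugetD : ∀ e, e < pw k → u.getD (je e) 0 = T (je e) := by
    intro e he
    have : je e < J + 1 := by rw [← hulen]; exact hje_lt e he
    exact pref_getD T this 0
  have hP : ∀ e, e < pw k → ∃ s, (T (je e) ≠ 0 → (evaln s (pe e) 0).isSome = true) := by
    intro e _
    by_cases hT : T (je e) = 0
    · exact ⟨0, fun h => absurd hT h⟩
    · have hdom : (phi (je e) (je e)).Dom := (T_ne_zero_iff _).1 hT
      rw [phi_je] at hdom
      have hdom' : ((pe e).eval 0).Dom := by rw [pe_eval]; exact hdom
      obtain ⟨a, ha⟩ := Part.dom_iff_mem.1 hdom'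
      obtain ⟨s, hs⟩ := evaln_complete.1 ha
      exact ⟨s, fun _ => Option.isSome_iff_exists.2 ⟨a, hs⟩⟩
  obtain ⟨s0, hs0⟩ := exists_uniform
    (fun e s s' hss h ht => isSome_mono hss (h ht)) hP
  have hstable : ∀ s', s0 ≤ s' → Bnd s' k u = Bnd s0 k u := by
    intro s' hss
    unfold Bnd
    congr 1
    apply List.map_congr_left
    intro e he'
    rw [List.mem_range] at he'
    by_cases h0 : u.getD (je e) 0 = 0
    · rw [if_pos h0, if_pos h0]
    · rw [if_neg h0, if_neg h0]
      have hT : T (je e) ≠ 0 := by rw [← hugetD e he']; exact h0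
      obtain ⟨a, ha⟩ := Option.isSome_iff_exists.1 (hs0 e he' hT)
      have ha' : evaln s' (pe e) 0 = some a :=
        Option.mem_def.1 (evaln_mono hss (Option.mem_def.2 ha))
      rw [ha, ha']
  set s := max (max (Encodable.encode u + 1) s0) (Bnd s0 k u + 1) with hsdef
  have hs0s : s0 ≤ s := le_trans (le_max_right _ _) (le_max_left _ _)
  refine ⟨u, s, ?_, ?_, ?_⟩
  · exact mem_cylN_pref T (J + 1)
  · have : Encodable.encode u + 1 ≤ s := le_trans (le_max_left _ _) (le_max_left _ _)
    omega
  · unfold acc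
    rw [Bool.and_eq_true, Bool.and_eq_true]
    have hminv : min s (prefB (fun _ => false) s).length = s := by
      rw [prefB_length]; omega
    refine ⟨⟨?_, ?_⟩, ?_⟩
    · apply List.all_eq_true.2
      intro e he'
      rw [List.mem_range] at he'
      rw [Bool.and_eq_true]
      refine ⟨decide_eq_true (hje_lt e he'), ?_⟩
      by_cases h0 : u.getD (je e) 0 = 0
      · exact bor_iff.2 (Or.inl (decide_eq_true h0))
      · refine bor_iff.2 (Or.inr ?_)
        have hT : T (je e) ≠ 0 := by rw [← hugetD e he']; exact h0
        exact isSome_mono hs0s (hs0 e he' hT)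
    · apply List.all_eq_true.2
      intro i hi
      rw [hminv, List.mem_range] at hi
      rw [prefB_getD _ hi]
      rfl
    · apply decide_eq_true
      rw [hminv, hstable s hs0s]
      have : Bnd s0 k u + 1 ≤ s := le_max_right _ _
      omega

/-! ### structure of `Mfun` -/

theorem emit_length (k : ℕ) (l : List Bool) (s : ℕ) : 1 ≤ (emit k l s).length := by
  simp [emit]

theorem acc_append {k s : ℕ} {u : List ℕ} (l l' : List Bool) (hs : s ≤ l.length) :
    acc k (l ++ l') s u = acc k l s u := by
  unfold acc
  have h1 : min s (l ++ l').length = s := by rw [List.length_append]; omega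
  have h2 : min s l.length = s := by omega
  rw [h1, h2]
  congr 1
  congr 1
  apply list_all_congr
  intro i hi
  rw [List.mem_range] at hi
  rw [List.getD_append _ _ _ _ (by omega)]

theorem emit_append (k : ℕ) (l l' : List Bool) {s : ℕ} (hs : s ≤ l.length) :
    emit k (l ++ l') s = emit k l s := by
  unfold emit
  congr 1
  apply list_filterMap_congr
  intro c _
  rw [acc_append l l' hs]

theorem Mfun_isPrefix (k : ℕ) (l l' : List Bool) : Mfun k l <+: Mfun k (l ++ l') := by
  refine ⟨((List.range l'.length).map fun j => l.length + 1 + j).flatMap fun s =>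
    emit k (l ++ l') s, ?_⟩
  unfold Mfun
  rw [List.length_append]
  have hsplit : l.length + l'.length + 1 = (l.length + 1) + l'.length := by omega
  conv_rhs => rw [hsplit, List.range_add, List.flatMap_append]
  congr 1
  apply list_flatMap_congr
  intro s hs
  rw [List.mem_range] at hs
  exact (emit_append k l l' (by omega)).symm

theorem Mfun_length (k : ℕ) (l : List Bool) : l.length + 1 ≤ (Mfun k l).length := by
  unfold Mfun
  generalize l.length + 1 = n
  induction n with
  | zero => omega
  | succ n ih =>
    rw [List.range_succ, List.flatMap_append]
    rw [List.length_append]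
    have := emit_length k l n
    simp only [List.flatMap_cons, List.flatMap_nil, List.append_nil]
    omega

theorem mem_Mfun {v k : ℕ} {l : List Bool} :
    v ∈ Mfun k l ↔ ∃ s, s ≤ l.length ∧ v ∈ emit k l s := by
  unfold Mfun
  rw [List.mem_flatMap]
  constructor
  · rintro ⟨s, hs, hv⟩
    exact ⟨s, by rw [List.mem_range] at hs; omega, hv⟩
  · rintro ⟨s, hs, hv⟩
    exact ⟨s, List.mem_range.2 (by omega), hv⟩

theorem mem_emit {v k s : ℕ} {l : List Bool} :
    v ∈ emit k l s ↔ v = 0 ∨ ∃ c, c < s ∧ v = c + 1 ∧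
      (wit s (Denumerable.ofNat (List ℕ) c) || acc k l s (Denumerable.ofNat (List ℕ) c)) = true := by
  unfold emit
  rw [List.mem_cons]
  constructor
  · rintro (rfl | hv)
    · exact Or.inl rfl
    · obtain ⟨c, hc, hsome⟩ := List.mem_filterMap.1 hv
      rw [List.mem_range] at hc
      rcases hcond : (wit s (Denumerable.ofNat (List ℕ) c) || acc k l s (Denumerable.ofNat (List ℕ) c)) with _ | _
      · rw [hcond] at hsome; simp at hsome
      · rw [hcond] at hsome
        simp only [Bool.cond_true, Option.some.injEq] at hsome
        exact Or.inr ⟨c, hc, hsome.symm, hcond⟩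
  · rintro (rfl | ⟨c, hc, rfl, hcond⟩)
    · exact Or.inl rfl
    · refine Or.inr (List.mem_filterMap.2 ⟨c, List.mem_range.2 hc, ?_⟩)
      rw [hcond]
      rfl

/-! ### Kolmogorov facts -/

theorem exists_prog {x : ℕ → Bool} (hx : Computable x) : ∃ e, computesSeq e x := by
  have h : Computable fun n => (cond (x n) 1 0 : ℕ) :=
    Computable.cond hx (Computable.const 1) (Computable.const 0)
  have h2 : Nat.Partrec fun n => Part.some ((cond (x n) 1 0 : ℕ)) := Partrec.nat_iff.1 h
  obtain ⟨c, hc⟩ := exists_code.1 h2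
  refine ⟨Encodable.encode c, fun n => ?_⟩
  show (Denumerable.ofNat Code (Encodable.encode c)).eval n = _
  rw [Denumerable.ofNat_encode, hc]

theorem exists_small_prog {x : ℕ → Bool} (hx : Computable x) {k : ℕ} (hk : Kseq x ≤ k) :
    ∃ e, e < pw k ∧ computesSeq e x := by
  obtain ⟨e0, he0⟩ := exists_prog hx
  have hne : (Nat.size '' {e | computesSeq e x}).Nonempty := ⟨Nat.size e0, ⟨e0, he0, rfl⟩⟩
  have hmem := Nat.sInf_mem hne
  obtain ⟨e, he, hesize⟩ := hmem
  refine ⟨e, ?_, he⟩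
  rw [pw_eq]
  rw [← Nat.size_le]
  rw [hesize]
  exact hk

/-! ### Main theorem -/

/-- The function `G : {0,1}^ℕ_c → O(𝔹)` mapping `0^ω` to `𝔹` and every other computable
binary sequence to `𝔹 \ {T}` is K-computable: a computable monotone functional maps
(`k ≥ K(x)`, a Type-2 name of `x`) to a name of `G(x)`. -/
theorem stmt17 :
    ∃ G : (ℕ → Bool) → Set (ℕ → ℕ),
      G (fun _ => false) = Set.univ ∧
      (∀ x : ℕ → Bool, x ≠ (fun _ => false) → G x = {T}ᶜ) ∧
      ∃ M : ℕ → List Bool → List ℕ, Computable₂ M ∧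
        (∀ k l l', M k l <+: M k (l ++ l')) ∧
        ∀ x : ℕ → Bool, Computable x → ∀ k, Kseq x ≤ k →
          ∃ g : ℕ → ℕ, OBName g (G x) ∧
            (∀ m, M k (prefB x m) = pref g (M k (prefB x m)).length) ∧
            (∀ n, ∃ m, n ≤ (M k (prefB x m)).length) := by
  classical
  refine ⟨fun x => if x = (fun _ => false) then Set.univ else {T}ᶜ, by simp, ?_, ?_⟩
  · intro x hx
    simp [hx]
  refine ⟨Mfun, computable_Mfun, fun k l l' => Mfun_isPrefix k l l', ?_⟩
  intro x hxc k hkx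
  -- the chain of outputs
  set L : ℕ → List ℕ := fun m => Mfun k (prefB x m) with hL
  have hchain : ∀ {m m'}, m ≤ m' → L m <+: L m' := by
    intro m m' hmm
    obtain ⟨t, ht⟩ := prefB_isPrefix x hmm
    have := Mfun_isPrefix k (prefB x m) t
    rwa [ht] at this
  have hlen : ∀ m, m + 1 ≤ (L m).length := by
    intro m
    have := Mfun_length k (prefB x m)
    rwa [prefB_length] at this
  set g : ℕ → ℕ := fun n => (L (n + 1)).getD n 0 with hg
  have hgval : ∀ m i, i < (L m).length → (L m).getD i 0 = g i := by
    intro m i hi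
    have h1 : L m <+: L (max m (i + 1)) := hchain (le_max_left _ _)
    have h2 : L (i + 1) <+: L (max m (i + 1)) := hchain (le_max_right _ _)
    have hi2 : i < (L (i + 1)).length := by have := hlen (i + 1); omega
    rw [← isPrefix_getD h1 hi, isPrefix_getD h2 hi2]
  have hprefix_eq : ∀ m, Mfun k (prefB x m) = pref g (Mfun k (prefB x m)).length := by
    intro m
    apply List.ext_getElem
    · rw [pref_length]
    · intro i h1 h2
      rw [pref_getElem g (by rwa [pref_length] at h2)]
      rw [← List.getD_eq_getElem _ 0 h1]
      exact hgval m i h1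
  -- the characterization of enumerated cylinders
  have acc_prefB : ∀ {s m : ℕ} (u : List ℕ), s ≤ m →
      acc k (prefB x m) s u = acc k (prefB x s) s u := by
    intro s m u hsm
    obtain ⟨t, ht⟩ := prefB_isPrefix x hsm
    rw [← ht, acc_append _ t (by rw [prefB_length])]
  have hQ : ∀ u : List ℕ, (∃ n, g n = Encodable.encode u + 1) ↔
      (∃ s, Encodable.encode u < s ∧
        (wit s u || acc k (prefB x s) s u) = true) := by
    intro u
    constructor
    · rintro ⟨n, hn⟩
      have hmem : Encodable.encode u + 1 ∈ L (n + 1) := by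
        have hi : n < (L (n + 1)).length := by have := hlen (n + 1); omega
        rw [← hn, ← hgval (n + 1) n hi, List.getD_eq_getElem _ _ hi]
        exact List.getElem_mem hi
      obtain ⟨s, hs, hv⟩ := mem_Mfun.1 hmem
      rw [prefB_length] at hs
      rcases mem_emit.1 hv with h0 | ⟨c, hc, hcv, hcond⟩
      · omega
      · have hcu : c = Encodable.encode u := by omega
        subst hcu
        rw [Denumerable.ofNat_encode, acc_prefB u hs] at hcond
        exact ⟨s, hc, hcond⟩
    · rintro ⟨s, hlt, hcond⟩
      have hv : Encodable.encode u + 1 ∈ emit k (prefB x s) s := by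
        refine mem_emit.2 (Or.inr ⟨Encodable.encode u, hlt, rfl, ?_⟩)
        rwa [Denumerable.ofNat_encode]
      have hmem : Encodable.encode u + 1 ∈ L s :=
        mem_Mfun.2 ⟨s, by rw [prefB_length], hv⟩
      obtain ⟨i, hi, hv'⟩ := List.mem_iff_getElem.1 hmem
      refine ⟨i, ?_⟩
      rw [← hgval s i hi, List.getD_eq_getElem _ _ hi, hv']
  -- how to witness any f ≠ T
  have hwitf : ∀ f : ℕ → ℕ, f ≠ T →
      ∃ u, (∃ n, g n = Encodable.encode u + 1) ∧ f ∈ cylN u := by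
    intro f hf
    obtain ⟨i, hi⟩ := Function.ne_iff.1 hf
    set u := pref f (i + 1) with hu
    have hTu : T ∉ cylN u := by
      intro hT
      have h1 : u.getD i 0 = T i := cylN_getD hT (by rw [hu, pref_length]; omega)
      rw [hu, pref_getD f (by omega)] at h1
      exact hi h1
    obtain ⟨s1, hs1⟩ := wit_complete hTu
    refine ⟨u, (hQ u).2 ⟨max s1 (Encodable.encode u + 1), ?_, ?_⟩, mem_cylN_pref f (i + 1)⟩
    · have := le_max_right s1 (Encodable.encode u + 1)
      omega
    · rw [bor_iff]
      exact Or.inl (wit_mono (le_max_left _ _) hs1)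
  refine ⟨g, ?_, hprefix_eq, fun n => ⟨n, by have h := hlen n; simp only [hL] at h; omega⟩⟩
  show (if x = (fun _ => false) then Set.univ else {T}ᶜ)
      = {f | ∃ (n : ℕ) (u : List ℕ), g n = Encodable.encode u + 1 ∧ f ∈ cylN u}
  by_cases hx0 : x = (fun _ => false)
  · rw [if_pos hx0]
    apply Set.ext
    intro f
    simp only [Set.mem_univ, Set.mem_setOf_eq, true_iff]
    by_cases hfT : f = T
    · subst hfT
      obtain ⟨u, s, hTu, hlt, hacc⟩ := acc_complete k
      obtain ⟨n, hn⟩ := (hQ u).2 ⟨s, hlt, by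
        rw [bor_iff]
        refine Or.inr ?_
        rwa [hx0]⟩
      exact ⟨n, u, hn, hTu⟩
    · obtain ⟨u, ⟨n, hn⟩, hcu⟩ := hwitf f hfT
      exact ⟨n, u, hn, hcu⟩
  · rw [if_neg hx0]
    have hxt : ∃ n, x n = true := by
      by_contra hno
      push_neg at hno
      exact hx0 (funext fun n => by
        have := hno n
        cases hxn : x n
        · rfl
        · exact absurd hxn this)
    obtain ⟨e, he, hce⟩ := exists_small_prog hxc hkx
    apply Set.ext
    intro f
    simp only [Set.mem_compl_iff, Set.mem_singleton_iff, Set.mem_setOf_eq]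
    constructor
    · intro hfT
      obtain ⟨u, ⟨n, hn⟩, hcu⟩ := hwitf f hfT
      exact ⟨n, u, hn, hcu⟩
    · rintro ⟨n, u, hn, hcu⟩ rfl
      obtain ⟨s, _, hcond⟩ := (hQ u).1 ⟨n, hn⟩
      rcases bor_iff.1 hcond with h' | h'
      · exact wit_sound h' hcu
      · exact acc_sound he hce hxt (le_refl s) h' hcu
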